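/- Let n, a, b, t be positive integers and let M = max over u, v, s ∈ [n] with u + v ≥ s + t of C(s,u) · C(n−s, a−u) · C(s,v) · C(n−s, b−v). Then M ≤ N_prod(n,a,b,t) ≤ n³ · M. -/

import Mathlib

open Finset

/-- The ground set `[n] = {1,…,n}`. -/
def gs (n : ℕ) : Finset ℕ := Finset.Icc 1 n

/-- `F` is an `m`-uniform family of subsets of `[n]`. -/
def UniformOn (n m : ℕ) (F : Finset (Finset ℕ)) : Prop :=
  ∀ A ∈ F, A ⊆ gs n ∧ A.card = m

/-- `F` and `G` are cross-`t`-intersecting. -/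
def CrossInt (t : ℕ) (F G : Finset (Finset ℕ)) : Prop :=
  ∀ A ∈ F, ∀ B ∈ G, t ≤ (A ∩ B).card

/-- The maximum of `|F| ⬝ |G|` over cross-`t`-intersecting pairs where `F` is an
`a`-uniform family and `G` a `b`-uniform family of subsets of `[n]`. -/
noncomputable def NProd (n a b t : ℕ) : ℕ :=
  sSup {x : ℕ | ∃ F G : Finset (Finset ℕ),
    UniformOn n a F ∧ UniformOn n b G ∧ CrossInt t F G ∧ x = F.card * G.card}

/-- The binomial coefficient `C(m, k)` for an integer lower index `k`
(equal to `0` when `k < 0`). -/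
def chooseZ (m : ℕ) (k : ℤ) : ℕ := if 0 ≤ k then m.choose k.toNat else 0


open UV
open scoped FinsetFamily

/-- the family of all `m`-subsets of `[n]` meeting `[s]` in exactly `u` elements. -/
def Slice (n m s u : ℕ) : Finset (Finset ℕ) :=
  ((gs n).powersetCard m).filter (fun A => (A ∩ Finset.Icc 1 s).card = u)

lemma mem_Slice {n m s u : ℕ} {A : Finset ℕ} :
    A ∈ Slice n m s u ↔ A ⊆ gs n ∧ A.card = m ∧ (A ∩ Finset.Icc 1 s).card = u := by
  simp [Slice, Finset.mem_powersetCard, and_assoc]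

lemma card_Slice {n m s u : ℕ} (hs : s ≤ n) :
    (Slice n m s u).card = s.choose u * chooseZ (n - s) ((m : ℤ) - u) := by
  by_cases hum : u ≤ m
  · have hZ : chooseZ (n - s) ((m : ℤ) - u) = (n - s).choose (m - u) := by
      have h0 : (0:ℤ) ≤ (m : ℤ) - u := by omega
      rw [chooseZ, if_pos h0]
      congr 1
      omega
    rw [hZ]
    have hcard : (Slice n m s u).card
        = ((Finset.Icc 1 s).powersetCard u ×ˢ (Finset.Icc (s+1) n).powersetCard (m - u)).card := by
      apply Finset.card_nbij' (fun A => (A ∩ Finset.Icc 1 s, A \ Finset.Icc 1 s))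
        (fun p => p.1 ∪ p.2)
      · intro A hA
        rw [Finset.mem_coe, mem_Slice] at hA
        obtain ⟨hsub, hcA, hiA⟩ := hA
        rw [Finset.mem_coe, Finset.mem_product]
        constructor
        · rw [Finset.mem_powersetCard]
          exact ⟨Finset.inter_subset_right, hiA⟩
        · rw [Finset.mem_powersetCard]
          dsimp only
          constructor
          · intro x hx
            rw [Finset.mem_sdiff] at hx
            have h1 := hsub hx.1
            rw [gs, Finset.mem_Icc] at h1
            rw [Finset.mem_Icc]
            have : ¬ (1 ≤ x ∧ x ≤ s) := by simpa [Finset.mem_Icc] using hx.2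
            omega
          · have := Finset.card_inter_add_card_sdiff A (Finset.Icc 1 s)
            omega
      · intro p hp
        rw [Finset.mem_coe, Finset.mem_product, Finset.mem_powersetCard, Finset.mem_powersetCard] at hp
        obtain ⟨⟨hP, hPc⟩, hQ, hQc⟩ := hp
        have hdisj : Disjoint p.1 p.2 := by
          apply Finset.disjoint_left.2
          intro x hx1 hx2
          have := hP hx1; have := hQ hx2
          rw [Finset.mem_Icc] at *
          omega
        rw [Finset.mem_coe, mem_Slice]
        refine ⟨?_, ?_, ?_⟩
        · intro x hx
          rw [Finset.mem_union] at hx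
          rw [gs, Finset.mem_Icc]
          rcases hx with hx | hx
          · have := hP hx; rw [Finset.mem_Icc] at this; omega
          · have := hQ hx; rw [Finset.mem_Icc] at this; omega
        · rw [Finset.card_union_of_disjoint hdisj, hPc, hQc]; omega
        · have h1 : p.1 ∩ Finset.Icc 1 s = p.1 := Finset.inter_eq_left.2 hP
          have h2 : p.2 ∩ Finset.Icc 1 s = ∅ := by
            apply Finset.eq_empty_of_forall_notMem
            intro x hx
            rw [Finset.mem_inter, Finset.mem_Icc] at hx
            have := hQ hx.1; rw [Finset.mem_Icc] at this; omega
          rw [Finset.union_inter_distrib_right, h1, h2, Finset.union_empty, hPc]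
      · intro A _
        exact sup_inf_sdiff A (Finset.Icc 1 s)
      · intro p hp
        rw [Finset.mem_coe, Finset.mem_product, Finset.mem_powersetCard, Finset.mem_powersetCard] at hp
        obtain ⟨⟨hP, _⟩, hQ, _⟩ := hp
        have h1 : p.1 ∩ Finset.Icc 1 s = p.1 := Finset.inter_eq_left.2 hP
        have h2 : p.2 ∩ Finset.Icc 1 s = ∅ := by
          apply Finset.eq_empty_of_forall_notMem
          intro x hx
          rw [Finset.mem_inter, Finset.mem_Icc] at hx
          have := hQ hx.1; rw [Finset.mem_Icc] at this; omega
        have hQ' : p.2 \ Finset.Icc 1 s = p.2 := by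
          apply Finset.sdiff_eq_self_of_disjoint
          rw [Finset.disjoint_iff_inter_eq_empty]; exact h2
        have hP' : p.1 \ Finset.Icc 1 s = ∅ := by
          rw [Finset.sdiff_eq_empty_iff_subset]; exact hP
        ext <;> simp only [Prod.fst, Prod.snd]
        · rw [Finset.union_inter_distrib_right, h1, h2, Finset.union_empty]
        · rw [Finset.union_sdiff_distrib, hQ', hP', Finset.empty_union]
    rw [hcard, Finset.card_product, Finset.card_powersetCard, Finset.card_powersetCard,
      Nat.card_Icc, Nat.card_Icc]
    congr 2 <;> omega
  · have h1 : Slice n m s u = ∅ := by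
      apply Finset.eq_empty_of_forall_notMem
      intro A hA
      rw [mem_Slice] at hA
      have : (A ∩ Finset.Icc 1 s).card ≤ A.card :=
        Finset.card_le_card Finset.inter_subset_left
      omega
    have h2 : chooseZ (n - s) ((m : ℤ) - u) = 0 := by
      rw [chooseZ, if_neg]; omega
    rw [h1, h2]; simp

def wSum (A : Finset ℕ) : ℕ := ∑ x ∈ A, x
def famW (F : Finset (Finset ℕ)) : ℕ := ∑ A ∈ F, wSum A

def Shifted (n : ℕ) (F : Finset (Finset ℕ)) : Prop :=
  ∀ i j : ℕ, 1 ≤ i → i < j → j ≤ n → ∀ A ∈ F, j ∈ A → i ∉ A → insert i (A.erase j) ∈ F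

lemma compress_eq_of (i j : ℕ) (A : Finset ℕ) (hij : i ≠ j) (hi : i ∉ A) (hj : j ∈ A) :
    compress {i} {j} A = insert i (A.erase j) := by
  rw [compress, if_pos ⟨by simpa using hi, by simpa using hj⟩]
  ext x
  simp only [Finset.sup_eq_union, Finset.mem_sdiff, Finset.mem_union, Finset.mem_singleton,
    Finset.mem_insert, Finset.mem_erase]
  constructor
  · rintro ⟨hx | hx, hxj⟩
    · exact Or.inr ⟨hxj, hx⟩
    · exact Or.inl hx
  · rintro (rfl | ⟨hxj, hx⟩)
    · exact ⟨Or.inr rfl, hij⟩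
    · exact ⟨Or.inl hx, hxj⟩

lemma compress_eq_self_of (i j : ℕ) (A : Finset ℕ) (h : i ∈ A ∨ j ∉ A) :
    compress {i} {j} A = A := by
  rw [compress, if_neg]
  rintro ⟨h1, h2⟩
  rcases h with h | h
  · exact (Finset.disjoint_singleton_left.1 h1) h
  · exact h (Finset.singleton_subset_iff.1 h2)

lemma compress_changed {i j : ℕ} {A : Finset ℕ} (h : compress {i} {j} A ≠ A) :
    i ∉ A ∧ j ∈ A := by
  by_contra hc
  push_neg at hc
  apply h
  apply compress_eq_self_of
  by_cases hiA : i ∈ A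
  · exact Or.inl hiA
  · exact Or.inr (hc hiA)

lemma wSum_shift {i j : ℕ} {A : Finset ℕ} (hij : i < j) (hi : i ∉ A) (hj : j ∈ A) :
    wSum (insert i (A.erase j)) + j = wSum A + i := by
  have h1 : ∑ x ∈ insert i (A.erase j), x = i + ∑ x ∈ A.erase j, x :=
    Finset.sum_insert (by simp [Finset.mem_erase, hi])
  have h2 : ∑ x ∈ A.erase j, x + j = ∑ x ∈ A, x := Finset.sum_erase_add A _ hj
  simp only [wSum]
  omega

/-- membership in a (i,j)-compressed family: general description. -/
lemma mem_compression_cases {i j : ℕ} (hij : i < j) {F : Finset (Finset ℕ)} {A' : Finset ℕ}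
    (h : A' ∈ 𝓒 {i} {j} F) :
    (A' ∈ F ∧ compress {i} {j} A' ∈ F) ∨
    (A' ∉ F ∧ ∃ A ∈ F, i ∉ A ∧ j ∈ A ∧ A' = insert i (A.erase j)) := by
  rcases (mem_compression.1 h) with h1 | ⟨hA', A, hA, hcA⟩
  · exact Or.inl h1
  · right
    refine ⟨hA', A, hA, ?_⟩
    have hne : compress {i} {j} A ≠ A := by
      rintro heq
      rw [heq] at hcA
      exact hA' (hcA ▸ hA)
    obtain ⟨hi, hj⟩ := compress_changed hne
    exact ⟨hi, hj, by rw [← hcA, compress_eq_of i j A (by omega) hi hj]⟩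

lemma uniform_compression {n m i j : ℕ} (hi : 1 ≤ i) (hij : i < j) (hj : j ≤ n)
    {F : Finset (Finset ℕ)} (hF : UniformOn n m F) : UniformOn n m (𝓒 {i} {j} F) := by
  intro A' hA'
  rcases mem_compression_cases hij hA' with ⟨hA, _⟩ | ⟨_, A, hA, hiA, hjA, rfl⟩
  · exact hF A' hA
  · obtain ⟨hsub, hcard⟩ := hF A hA
    constructor
    · intro x hx
      rcases Finset.mem_insert.1 hx with rfl | hx
      · rw [gs, Finset.mem_Icc]
        have := hsub hjA; rw [gs, Finset.mem_Icc] at this; omega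
      · exact hsub (Finset.mem_of_mem_erase hx)
    · rw [Finset.card_insert_of_notMem (by simp [Finset.mem_erase, hiA]),
        Finset.card_erase_of_mem hjA]
      have : 0 < A.card := Finset.card_pos.2 ⟨j, hjA⟩
      omega

lemma crossInt_comm {t : ℕ} {F G : Finset (Finset ℕ)} (h : CrossInt t F G) : CrossInt t G F := by
  intro B hB A hA
  rw [Finset.inter_comm]
  exact h A hA B hB

/-- one-sided key case for cross-intersection preservation. -/
lemma cross_key {t i j : ℕ} (hij : i < j) {F G : Finset (Finset ℕ)} (h : CrossInt t F G)
    {A' B : Finset ℕ} (hA' : A' ∈ F) (hcA' : compress {i} {j} A' ∈ F) (hB : B ∈ G)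
    (hiB : i ∉ B) (hjB : j ∈ B) :
    t ≤ (A' ∩ insert i (B.erase j)).card := by
  by_cases hjA : j ∈ A'
  · by_cases hiA : i ∈ A'
    · -- i,j ∈ A' : intersection has same card
      have : A' ∩ insert i (B.erase j) = insert i ((A' ∩ B).erase j) := by
        ext x
        simp only [Finset.mem_inter, Finset.mem_insert, Finset.mem_erase]
        constructor
        · rintro ⟨hxA, rfl | ⟨hxj, hxB⟩⟩
          · exact Or.inl rfl
          · exact Or.inr ⟨hxj, hxA, hxB⟩
        · rintro (rfl | ⟨hxj, hxA, hxB⟩)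
          · exact ⟨hiA, Or.inl rfl⟩
          · exact ⟨hxA, Or.inr ⟨hxj, hxB⟩⟩
      rw [this, Finset.card_insert_of_notMem (by simp [Finset.mem_erase, Finset.mem_inter, hiB]),
        Finset.card_erase_of_mem (by simp [Finset.mem_inter, hjA, hjB])]
      have ht := h A' hA' B hB
      have : 0 < (A' ∩ B).card := by
        apply Finset.card_pos.2 ⟨j, by simp [Finset.mem_inter, hjA, hjB]⟩
      omega
    · -- j ∈ A', i ∉ A' : use compressed A''
      have hcAeq : compress {i} {j} A' = insert i (A'.erase j) :=
        compress_eq_of i j A' (by omega) hiA hjA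
      rw [hcAeq] at hcA'
      have ht := h _ hcA' B hB
      have : insert i (A'.erase j) ∩ B = A' ∩ insert i (B.erase j) := by
        ext x
        simp only [Finset.mem_inter, Finset.mem_insert, Finset.mem_erase]
        constructor
        · rintro ⟨rfl | ⟨hxj, hxA⟩, hxB⟩
          · exact absurd hxB hiB
          · exact ⟨hxA, Or.inr ⟨hxj, hxB⟩⟩
        · rintro ⟨hxA, rfl | ⟨hxj, hxB⟩⟩
          · exact absurd hxA hiA
          · exact ⟨Or.inr ⟨hxj, hxA⟩, hxB⟩
      rw [← this]
      exact ht
  · -- j ∉ A' : intersection only grows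
    have ht := h A' hA' B hB
    apply le_trans ht
    apply Finset.card_le_card
    intro x hx
    rw [Finset.mem_inter] at hx ⊢
    refine ⟨hx.1, Finset.mem_insert.2 (Or.inr (Finset.mem_erase.2 ⟨?_, hx.2⟩))⟩
    rintro rfl
    exact hjA hx.1

lemma cross_compression {t i j : ℕ} (hij : i < j) {F G : Finset (Finset ℕ)}
    (h : CrossInt t F G) : CrossInt t (𝓒 {i} {j} F) (𝓒 {i} {j} G) := by
  intro A' hA' B' hB'
  rcases mem_compression_cases hij hA' with ⟨hAF, hcA⟩ | ⟨hAnF, A, hAF, hiA, hjA, rfl⟩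
  · rcases mem_compression_cases hij hB' with ⟨hBG, _⟩ | ⟨hBnG, B, hBG, hiB, hjB, rfl⟩
    · exact h A' hAF B' hBG
    · exact cross_key hij h hAF hcA hBG hiB hjB
  · rcases mem_compression_cases hij hB' with ⟨hBG, hcB⟩ | ⟨hBnG, B, hBG, hiB, hjB, rfl⟩
    · rw [Finset.inter_comm]
      exact cross_key hij (crossInt_comm h) hBG hcB hAF hiA hjA
    · -- both compressed
      have ht := h A hAF B hBG
      have : insert i (A.erase j) ∩ insert i (B.erase j) = insert i ((A ∩ B).erase j) := by
        ext x
        simp only [Finset.mem_inter, Finset.mem_insert, Finset.mem_erase]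
        constructor
        · rintro ⟨rfl | ⟨hxj, hxA⟩, h2⟩
          · exact Or.inl rfl
          · rcases h2 with rfl | ⟨_, hxB⟩
            · exact Or.inl rfl
            · exact Or.inr ⟨hxj, hxA, hxB⟩
        · rintro (rfl | ⟨hxj, hxA, hxB⟩)
          · exact ⟨Or.inl rfl, Or.inl rfl⟩
          · exact ⟨Or.inr ⟨hxj, hxA⟩, Or.inr ⟨hxj, hxB⟩⟩
      rw [this, Finset.card_insert_of_notMem (by simp [Finset.mem_erase, Finset.mem_inter, hiA]),
        Finset.card_erase_of_mem (by simp [Finset.mem_inter, hjA, hjB])]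
      have : 0 < (A ∩ B).card := by
        apply Finset.card_pos.2 ⟨j, by simp [Finset.mem_inter, hjA, hjB]⟩
      omega

lemma second_part_eq {i j : ℕ} (F : Finset (Finset ℕ)) :
    {a ∈ F.image (compress {i} {j}) | a ∉ F}
      = (F.filter fun a => compress {i} {j} a ∉ F).image (compress {i} {j}) := by
  rw [Finset.filter_image]

lemma famW_compression_le {i j : ℕ} (hij : i < j) (F : Finset (Finset ℕ)) :
    famW (𝓒 {i} {j} F) ≤ famW F := by
  rw [famW, compression, Finset.sum_union compress_disjoint, second_part_eq]
  rw [Finset.sum_image (fun x hx y hy hxy => compress_injOn (Finset.mem_coe.2 hx)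
    (Finset.mem_coe.2 hy) hxy)]
  have h1 : ∑ A ∈ F.filter (fun a => compress {i} {j} a ∉ F), wSum (compress {i} {j} A)
      ≤ ∑ A ∈ F.filter (fun a => compress {i} {j} a ∉ F), wSum A := by
    apply Finset.sum_le_sum
    intro A hA
    rw [Finset.mem_filter] at hA
    by_cases hc : compress {i} {j} A = A
    · rw [hc]
    · obtain ⟨hi, hj⟩ := compress_changed hc
      rw [compress_eq_of i j A (by omega) hi hj]
      have := wSum_shift hij hi hj
      omega
  calc ∑ A ∈ F.filter (fun a => compress {i} {j} a ∈ F), wSum A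
        + ∑ A ∈ F.filter (fun a => compress {i} {j} a ∉ F), wSum (compress {i} {j} A)
      ≤ ∑ A ∈ F.filter (fun a => compress {i} {j} a ∈ F), wSum A
        + ∑ A ∈ F.filter (fun a => compress {i} {j} a ∉ F), wSum A := by omega
    _ = famW F := by rw [Finset.sum_filter_add_sum_filter_not]; rfl

lemma famW_compression_lt {i j : ℕ} (hij : i < j) {F : Finset (Finset ℕ)}
    {A₀ : Finset ℕ} (hA₀ : A₀ ∈ F) (hc₀ : compress {i} {j} A₀ ∉ F) :
    famW (𝓒 {i} {j} F) < famW F := by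
  rw [famW, compression, Finset.sum_union compress_disjoint, second_part_eq]
  rw [Finset.sum_image (fun x hx y hy hxy => compress_injOn (Finset.mem_coe.2 hx)
    (Finset.mem_coe.2 hy) hxy)]
  have h1 : ∑ A ∈ F.filter (fun a => compress {i} {j} a ∉ F), wSum (compress {i} {j} A)
      < ∑ A ∈ F.filter (fun a => compress {i} {j} a ∉ F), wSum A := by
    apply Finset.sum_lt_sum_of_nonempty ⟨A₀, Finset.mem_filter.2 ⟨hA₀, hc₀⟩⟩
    intro A hA
    rw [Finset.mem_filter] at hA
    have hc : compress {i} {j} A ≠ A := by intro h; exact hA.2 (h.symm ▸ hA.1)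
    obtain ⟨hi, hj⟩ := compress_changed hc
    rw [compress_eq_of i j A (by omega) hi hj]
    have := wSum_shift hij hi hj
    omega
  calc ∑ A ∈ F.filter (fun a => compress {i} {j} a ∈ F), wSum A
        + ∑ A ∈ F.filter (fun a => compress {i} {j} a ∉ F), wSum (compress {i} {j} A)
      < ∑ A ∈ F.filter (fun a => compress {i} {j} a ∈ F), wSum A
        + ∑ A ∈ F.filter (fun a => compress {i} {j} a ∉ F), wSum A := by omega
    _ = famW F := by rw [Finset.sum_filter_add_sum_filter_not]; rfl

lemma not_shifted_witness {n : ℕ} {F : Finset (Finset ℕ)} (h : ¬ Shifted n F) :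
    ∃ i j, 1 ≤ i ∧ i < j ∧ j ≤ n ∧ ∃ A ∈ F, j ∈ A ∧ i ∉ A ∧
      compress {i} {j} A ∉ F := by
  rw [Shifted] at h
  push_neg at h
  obtain ⟨i, j, hi, hij, hj, A, hA, hjA, hiA, hni⟩ := h
  exact ⟨i, j, hi, hij, hj, A, hA, hjA, hiA, by
    rwa [compress_eq_of i j A (by omega) hiA hjA]⟩

lemma shifted_of_all_compressed {n : ℕ} {F : Finset (Finset ℕ)}
    (h : ∀ i j, 1 ≤ i → i < j → j ≤ n → ∀ A ∈ F, compress {i} {j} A ∈ F) : Shifted n F := by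
  intro i j hi hij hj A hA hjA hiA
  have := h i j hi hij hj A hA
  rwa [compress_eq_of i j A (by omega) hiA hjA] at this

lemma exists_shifted (n a b t : ℕ) :
    ∀ N F G, famW F + famW G ≤ N → UniformOn n a F → UniformOn n b G → CrossInt t F G →
    ∃ F' G', UniformOn n a F' ∧ UniformOn n b G' ∧ CrossInt t F' G' ∧
      Shifted n F' ∧ Shifted n G' ∧ F'.card = F.card ∧ G'.card = G.card := by
  intro N
  induction N using Nat.strong_induction_on with
  | _ N ih =>
    intro F G hN hF hG hFG
    by_cases hsh : Shifted n F ∧ Shifted n G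
    · exact ⟨F, G, hF, hG, hFG, hsh.1, hsh.2, rfl, rfl⟩
    · rw [not_and_or] at hsh
      rcases hsh with hsh | hsh
      · obtain ⟨i, j, hi, hij, hj, A, hA, _, _, hni⟩ := not_shifted_witness hsh
        have hlt : famW (𝓒 {i} {j} F) + famW (𝓒 {i} {j} G) < N := by
          have := famW_compression_lt hij hA hni
          have := famW_compression_le hij G
          omega
        obtain ⟨F', G', h1, h2, h3, h4, h5, h6, h7⟩ :=
          ih _ hlt (𝓒 {i} {j} F) (𝓒 {i} {j} G) (le_refl _)
            (uniform_compression hi hij hj hF) (uniform_compression hi hij hj hG)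
            (cross_compression hij hFG)
        exact ⟨F', G', h1, h2, h3, h4, h5, by rw [h6, card_compression],
          by rw [h7, card_compression]⟩
      · obtain ⟨i, j, hi, hij, hj, B, hB, _, _, hni⟩ := not_shifted_witness hsh
        have hlt : famW (𝓒 {i} {j} F) + famW (𝓒 {i} {j} G) < N := by
          have := famW_compression_lt hij hB hni
          have := famW_compression_le hij F
          omega
        obtain ⟨F', G', h1, h2, h3, h4, h5, h6, h7⟩ :=
          ih _ hlt (𝓒 {i} {j} F) (𝓒 {i} {j} G) (le_refl _)
            (uniform_compression hi hij hj hF) (uniform_compression hi hij hj hG)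
            (cross_compression hij hFG)
        exact ⟨F', G', h1, h2, h3, h4, h5, by rw [h6, card_compression],
          by rw [h7, card_compression]⟩

section
variable {n a b t : ℕ}

/-- `|A ∩ [s]|`. -/
def ucount (A : Finset ℕ) (s : ℕ) : ℕ := (A ∩ Finset.Icc 1 s).card

lemma ucount_sum (A : Finset ℕ) (s : ℕ) :
    ucount A s = ∑ z ∈ A, (if 1 ≤ z ∧ z ≤ s then 1 else 0) := by
  rw [ucount]
  have : A ∩ Finset.Icc 1 s = A.filter (fun z => 1 ≤ z ∧ z ≤ s) := by
    ext z; simp [Finset.mem_Icc]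
  rw [this, Finset.card_filter]

lemma ucount_shift {x y s : ℕ} {A : Finset ℕ} (hxy : x < y) (hxA : x ∉ A) (hyA : y ∈ A) :
    ucount (insert x (A.erase y)) s + (if 1 ≤ y ∧ y ≤ s then 1 else 0)
      = ucount A s + (if 1 ≤ x ∧ x ≤ s then 1 else 0) := by
  rw [ucount_sum, ucount_sum]
  have h1 : ∑ z ∈ insert x (A.erase y), (if 1 ≤ z ∧ z ≤ s then 1 else 0)
      = (if 1 ≤ x ∧ x ≤ s then 1 else 0) + ∑ z ∈ A.erase y, (if 1 ≤ z ∧ z ≤ s then 1 else 0) :=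
    Finset.sum_insert (by simp [Finset.mem_erase, hxA])
  have h2 : ∑ z ∈ A.erase y, (if 1 ≤ z ∧ z ≤ s then 1 else 0)
        + (if 1 ≤ y ∧ y ≤ s then 1 else 0) = ∑ z ∈ A, (if 1 ≤ z ∧ z ≤ s then 1 else 0) :=
    Finset.sum_erase_add A _ hyA
  omega

lemma ucount_le (A : Finset ℕ) (s : ℕ) : ucount A s ≤ A.card :=
  Finset.card_le_card Finset.inter_subset_left

lemma ucount_split {x z : ℕ} (A : Finset ℕ) (h1 : 1 ≤ x) (h2 : x ≤ z) :
    ucount A z = ucount A x + (A ∩ Finset.Ioc x z).card := by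
  rw [ucount, ucount]
  have hu : A ∩ Finset.Icc 1 z = (A ∩ Finset.Icc 1 x) ∪ (A ∩ Finset.Ioc x z) := by
    ext w
    simp only [Finset.mem_inter, Finset.mem_Icc, Finset.mem_Ioc, Finset.mem_union]
    constructor
    · rintro ⟨hw, h3, h4⟩
      rcases le_or_gt w x with h5 | h5
      · exact Or.inl ⟨hw, h3, h5⟩
      · exact Or.inr ⟨hw, h5, h4⟩
    · rintro (⟨hw, h3, h4⟩ | ⟨hw, h3, h4⟩) <;> exact ⟨hw, by omega, by omega⟩
  rw [hu]
  apply Finset.card_union_of_disjoint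
  rw [Finset.disjoint_left]
  intro w hw hw'
  simp only [Finset.mem_inter, Finset.mem_Icc, Finset.mem_Ioc] at hw hw'
  omega

lemma ucount_full {A : Finset ℕ} {n : ℕ} (h : A ⊆ gs n) : ucount A n = A.card := by
  rw [gs] at h
  rw [ucount, Finset.inter_eq_left.2 h]

lemma ucount_not_mem {A : Finset ℕ} {x : ℕ} (hx : 1 ≤ x) (h : x ∉ A) :
    ucount A x = ucount A (x - 1) := by
  rw [ucount, ucount]
  congr 1
  ext z
  simp only [Finset.mem_inter, Finset.mem_Icc]
  constructor
  · rintro ⟨hz, h1, h2⟩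
    refine ⟨hz, h1, ?_⟩
    rcases Nat.lt_or_ge z x with h' | h'
    · omega
    · have : z = x := by omega
      exact absurd (this ▸ hz) h
  · rintro ⟨hz, h1, h2⟩
    exact ⟨hz, h1, by omega⟩


lemma ucount_shift' {x y s : ℕ} {A : Finset ℕ} (hx1 : 1 ≤ x) (hxy : x < y)
    (hxA : x ∉ A) (hyA : y ∈ A) :
    ucount (insert x (A.erase y)) s + (if y ≤ s then 1 else 0)
      = ucount A s + (if x ≤ s then 1 else 0) := by
  have h := ucount_shift (s := s) hxy hxA hyA
  have e1 : (if 1 ≤ x ∧ x ≤ s then 1 else 0) = (if x ≤ s then (1:ℕ) else 0) := by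
    by_cases hc : x ≤ s <;> simp [hc, hx1]
  have e2 : (if 1 ≤ y ∧ y ≤ s then 1 else 0) = (if y ≤ s then (1:ℕ) else 0) := by
    by_cases hc : y ≤ s <;> simp [hc]; omega
  rw [e1, e2] at h
  exact h

/-- The key structural lemma: for shifted cross-`t`-intersecting families, every pair
admits a level `s` where the two prefix counts sum to at least `s + t`. -/
lemma key_T (ht : 1 ≤ t) {F G : Finset (Finset ℕ)}
    (hF : UniformOn n a F) (hG : UniformOn n b G) (hFG : CrossInt t F G)
    (hsF : Shifted n F) (hsG : Shifted n G) :
    ∀ A ∈ F, ∀ B ∈ G, ∃ s, 1 ≤ s ∧ s ≤ n ∧ s + t ≤ ucount A s + ucount B s := by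
  classical
  suffices h : ∀ W : ℕ, ∀ A ∈ F, ∀ B ∈ G, wSum A + wSum B ≤ W →
      ∃ s, 1 ≤ s ∧ s ≤ n ∧ s + t ≤ ucount A s + ucount B s by
    intro A hAF B hBG
    exact h (wSum A + wSum B) A hAF B hBG (le_refl _)
  intro W
  induction W using Nat.strong_induction_on with
  | _ W ih =>
  intro A hAF B hBG hW
  by_contra hcon
  push_neg at hcon
  have hviol : ∀ s, 1 ≤ s → s ≤ n → ucount A s + ucount B s < s + t := by
    intro s h1 h2
    have := hcon s h1 h2
    omega
  obtain ⟨hAsub, hAcard⟩ := hF A hAF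
  obtain ⟨hBsub, hBcard⟩ := hG B hBG
  have htab : t ≤ (A ∩ B).card := hFG A hAF B hBG
  have htA : t ≤ a := by
    have : (A ∩ B).card ≤ A.card := Finset.card_le_card Finset.inter_subset_left
    omega
  have han : a ≤ n := by
    have := Finset.card_le_card hAsub
    rwa [hAcard, gs, Nat.card_Icc, Nat.add_sub_cancel] at this
  -- the "move" lemmas coming from minimality (via strong induction)
  have hMA : ∀ x y, 1 ≤ x → x < y → y ≤ n → y ∈ A → x ∉ A →
      ∃ s, x ≤ s ∧ s + 1 ≤ y ∧ s ≤ n ∧ ucount A s + ucount B s + 1 = s + t := by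
    intro x y hx hxy hyn hyA hxA
    have hA' : insert x (A.erase y) ∈ F := hsF x y hx hxy hyn A hAF hyA hxA
    have hw := wSum_shift hxy hxA hyA
    have hlt : wSum (insert x (A.erase y)) + wSum B < W ∨ W = 0 := by
      rcases Nat.eq_zero_or_pos W with h0 | h0
      · exact Or.inr h0
      · left; omega
    rcases hlt with hlt | h0
    · obtain ⟨s, hs1, hs2, hs3⟩ := ih _ hlt (insert x (A.erase y)) hA' B hBG (by omega)
      have hshift := ucount_shift' (s := s) hx hxy hxA hyA
      have hv := hviol s hs1 hs2
      refine ⟨s, ?_, ?_, hs2, ?_⟩ <;>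
      · by_cases hc1 : x ≤ s <;> by_cases hc2 : y ≤ s <;>
          simp only [hc1, hc2, if_true, if_false] at hshift <;> omega
    · -- W = 0 impossible since wSum A ≥ y ≥ 1
      exfalso
      have : y ≤ wSum A := by
        rw [wSum]
        exact Finset.single_le_sum (fun i _ => Nat.zero_le i) hyA
      omega
  have hMB : ∀ x y, 1 ≤ x → x < y → y ≤ n → y ∈ B → x ∉ B →
      ∃ s, x ≤ s ∧ s + 1 ≤ y ∧ s ≤ n ∧ ucount A s + ucount B s + 1 = s + t := by
    intro x y hx hxy hyn hyB hxB
    have hB' : insert x (B.erase y) ∈ G := hsG x y hx hxy hyn B hBG hyB hxB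
    have hw := wSum_shift hxy hxB hyB
    have hlt : wSum A + wSum (insert x (B.erase y)) < W ∨ W = 0 := by
      rcases Nat.eq_zero_or_pos W with h0 | h0
      · exact Or.inr h0
      · left; omega
    rcases hlt with hlt | h0
    · obtain ⟨s, hs1, hs2, hs3⟩ := ih _ hlt A hAF (insert x (B.erase y)) hB' (by omega)
      have hshift := ucount_shift' (s := s) hx hxy hxB hyB
      have hv := hviol s hs1 hs2
      refine ⟨s, ?_, ?_, hs2, ?_⟩ <;>
      · by_cases hc1 : x ≤ s <;> by_cases hc2 : y ≤ s <;>
          simp only [hc1, hc2, if_true, if_false] at hshift <;> omega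
    · exfalso
      have : y ≤ wSum B := by
        rw [wSum]
        exact Finset.single_le_sum (fun i _ => Nat.zero_le i) hyB
      omega
  -- tight levels
  by_cases hSne : ∃ s, 1 ≤ s ∧ s ≤ n ∧ ucount A s + ucount B s + 1 = s + t
  · obtain ⟨s₀, hs₀1, hs₀n, hs₀t⟩ := hSne
    set Q : ℕ → Prop := fun s => ucount A s + ucount B s + 1 = s + t with hQ
    have hQdec : DecidablePred Q := fun s => by rw [hQ]; infer_instance
    set z := Nat.findGreatest Q n with hzdef
    have hzn : z ≤ n := Nat.findGreatest_le n
    have hzQ : Q z := Nat.findGreatest_spec (P := Q) hs₀n (show Q s₀ from hs₀t)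
    have hz1 : 1 ≤ z :=
      le_trans hs₀1 (Nat.le_findGreatest (P := Q) hs₀n (show Q s₀ from hs₀t))
    have hzmax : ∀ s, s ≤ n → Q s → s ≤ z := by
      intro s h2 h3
      by_contra hgt
      push_neg at hgt
      exact Nat.findGreatest_is_greatest (P := Q) hgt h2 h3
    have hzeq : ucount A z + ucount B z + 1 = z + t := hzQ
    -- z + 1 cannot be in both
    have hnotboth : ¬ (z + 1 ∈ A ∧ z + 1 ∈ B) := by
      rintro ⟨h1, h2⟩
      have hn1 : z + 1 ≤ n := by
        have := hAsub h1; rw [gs, Finset.mem_Icc] at this; omega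
      have e1 : ucount A (z+1) = ucount A z + 1 := by
        rw [ucount_split A (by omega) (Nat.le_succ z)]
        have : A ∩ Finset.Ioc z (z+1) = {z+1} := by
          ext w
          simp only [Finset.mem_inter, Finset.mem_Ioc, Finset.mem_singleton]
          constructor
          · rintro ⟨hw, h3, h4⟩; omega
          · rintro rfl; exact ⟨h1, by omega, le_refl _⟩
        rw [this]; simp
      have e2 : ucount B (z+1) = ucount B z + 1 := by
        rw [ucount_split B (by omega) (Nat.le_succ z)]
        have : B ∩ Finset.Ioc z (z+1) = {z+1} := by
          ext w
          simp only [Finset.mem_inter, Finset.mem_Ioc, Finset.mem_singleton]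
          constructor
          · rintro ⟨hw, h3, h4⟩; omega
          · rintro rfl; exact ⟨h2, by omega, le_refl _⟩
        rw [this]; simp
      have := hviol (z+1) (by omega) hn1
      omega
    have hAfill : ∀ y ∈ A, z < y → ∀ x, z < x → x < y → x ∈ A := by
      intro y hy hzy x hzx hxy
      by_contra hxA
      have hyn : y ≤ n := by have := hAsub hy; rw [gs, Finset.mem_Icc] at this; omega
      obtain ⟨s, h1, h2, h3, h4⟩ := hMA x y (by omega) hxy hyn hy hxA
      have := hzmax s h3 (show Q s from h4)
      omega
    have hBfill : ∀ y ∈ B, z < y → ∀ x, z < x → x < y → x ∈ B := by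
      intro y hy hzy x hzx hxy
      by_contra hxB
      have hyn : y ≤ n := by have := hBsub hy; rw [gs, Finset.mem_Icc] at this; omega
      obtain ⟨s, h1, h2, h3, h4⟩ := hMB x y (by omega) hxy hyn hy hxB
      have := hzmax s h3 (show Q s from h4)
      omega
    have hABz : A ∩ B ⊆ Finset.Icc 1 z := by
      intro w hw
      rw [Finset.mem_inter] at hw
      have hw1 : 1 ≤ w := by have := hAsub hw.1; rw [gs, Finset.mem_Icc] at this; omega
      rw [Finset.mem_Icc]
      refine ⟨hw1, ?_⟩
      by_contra hwz
      push_neg at hwz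
      rcases Nat.eq_or_lt_of_le (Nat.succ_le_of_lt hwz) with heq | hlt
      · have hweq : z + 1 = w := heq
        apply hnotboth
        rw [hweq]
        exact hw
      · have h1 : z + 1 ∈ A := hAfill w hw.1 hwz (z+1) (by omega) (by omega)
        have h2 : z + 1 ∈ B := hBfill w hw.2 hwz (z+1) (by omega) (by omega)
        exact hnotboth ⟨h1, h2⟩
    -- inclusion-exclusion at z
    have hIE : ucount A z + ucount B z = (A ∩ B).card + ((A ∪ B) ∩ Finset.Icc 1 z).card := by
      have h1 : (A ∩ Finset.Icc 1 z) ∪ (B ∩ Finset.Icc 1 z) = (A ∪ B) ∩ Finset.Icc 1 z := by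
        rw [Finset.union_inter_distrib_right]
      have h2 : (A ∩ Finset.Icc 1 z) ∩ (B ∩ Finset.Icc 1 z) = A ∩ B := by
        rw [Finset.inter_inter_inter_comm, Finset.inter_self,
          Finset.inter_eq_left.2 hABz]
      have := Finset.card_union_add_card_inter (A ∩ Finset.Icc 1 z) (B ∩ Finset.Icc 1 z)
      rw [h1, h2] at this
      rw [ucount, ucount]
      omega
    -- find the largest hole x ≤ z
    have hhole : ∃ x, 1 ≤ x ∧ x ≤ z ∧ x ∉ A ∧ x ∉ B := by
      by_contra hno
      push_neg at hno
      have hsub : Finset.Icc 1 z ⊆ A ∪ B := by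
        intro w hw
        rw [Finset.mem_Icc] at hw
        rcases Classical.em (w ∈ A) with h | h
        · exact Finset.mem_union_left _ h
        · exact Finset.mem_union_right _ (hno w hw.1 hw.2 h)
      have hcard : ((A ∪ B) ∩ Finset.Icc 1 z).card = z := by
        rw [Finset.inter_eq_right.2 hsub, Nat.card_Icc]
        omega
      omega
    obtain ⟨x₀, hx₀1, hx₀z, hx₀A, hx₀B⟩ := hhole
    set R : ℕ → Prop := fun x => x ∉ A ∧ x ∉ B with hR
    have hRdec : DecidablePred R := fun s => by rw [hR]; infer_instance
    set x := Nat.findGreatest R z with hxdef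
    have hxz : x ≤ z := Nat.findGreatest_le z
    have hxR : R x := Nat.findGreatest_spec (P := R) hx₀z (show R x₀ from ⟨hx₀A, hx₀B⟩)
    have hx1 : 1 ≤ x :=
      le_trans hx₀1 (Nat.le_findGreatest (P := R) hx₀z (show R x₀ from ⟨hx₀A, hx₀B⟩))
    obtain ⟨hxA, hxB⟩ := hxR
    have hRsub : Finset.Ioc x z ⊆ A ∪ B := by
      intro w hw
      rw [Finset.mem_Ioc] at hw
      by_contra hwAB
      rw [Finset.mem_union] at hwAB
      push_neg at hwAB
      exact Nat.findGreatest_is_greatest (P := R) hw.1 hw.2 ⟨hwAB.1, hwAB.2⟩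
    have hIER : (A ∩ Finset.Ioc x z).card + (B ∩ Finset.Ioc x z).card
        = (z - x) + (A ∩ B ∩ Finset.Ioc x z).card := by
      have h1 : (A ∩ Finset.Ioc x z) ∪ (B ∩ Finset.Ioc x z) = Finset.Ioc x z := by
        rw [← Finset.union_inter_distrib_right, Finset.inter_eq_right.2 hRsub]
      have h2 : (A ∩ Finset.Ioc x z) ∩ (B ∩ Finset.Ioc x z) = A ∩ B ∩ Finset.Ioc x z := by
        rw [Finset.inter_inter_inter_comm, Finset.inter_self]
      have := Finset.card_union_add_card_inter (A ∩ Finset.Ioc x z) (B ∩ Finset.Ioc x z)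
      rw [h1, h2, Nat.card_Ioc] at this
      omega
    have hsplitA := ucount_split A hx1 hxz
    have hsplitB := ucount_split B hx1 hxz
    by_cases hr : (A ∩ B ∩ Finset.Ioc x z).Nonempty
    · -- there is a common element above the hole: use the smallest one
      have hy₀mem := Finset.min'_mem _ hr
      set y₀ := (A ∩ B ∩ Finset.Ioc x z).min' hr with hy₀def
      rw [Finset.mem_inter, Finset.mem_inter, Finset.mem_Ioc] at hy₀mem
      obtain ⟨⟨hy₀A, hy₀B⟩, hy₀x, hy₀z⟩ := hy₀mem
      obtain ⟨s, hs1, hs2, hs3, hs4⟩ := hMA x y₀ hx1 hy₀x (by omega) hy₀A hxA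
      have hsz : s ≤ z := hzmax s hs3 (show Q s from hs4)
      have hempty : A ∩ B ∩ Finset.Ioc x s = ∅ := by
        apply Finset.eq_empty_of_forall_notMem
        intro w hw
        rw [Finset.mem_inter, Finset.mem_Ioc] at hw
        have : y₀ ≤ w := Finset.min'_le _ w (by
          rw [Finset.mem_inter, Finset.mem_Ioc]
          exact ⟨hw.1, hw.2.1, by omega⟩)
        omega
      have hIERs : (A ∩ Finset.Ioc x s).card + (B ∩ Finset.Ioc x s).card = s - x := by
        have hsub : Finset.Ioc x s ⊆ A ∪ B := fun w hw => hRsub (by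
          rw [Finset.mem_Ioc] at hw ⊢
          omega)
        have h1 : (A ∩ Finset.Ioc x s) ∪ (B ∩ Finset.Ioc x s) = Finset.Ioc x s := by
          rw [← Finset.union_inter_distrib_right, Finset.inter_eq_right.2 hsub]
        have h2 : (A ∩ Finset.Ioc x s) ∩ (B ∩ Finset.Ioc x s) = A ∩ B ∩ Finset.Ioc x s := by
          rw [Finset.inter_inter_inter_comm, Finset.inter_self]
        have := Finset.card_union_add_card_inter (A ∩ Finset.Ioc x s) (B ∩ Finset.Ioc x s)
        rw [h1, h2, hempty, Nat.card_Ioc] at this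
        simp only [Finset.card_empty] at this
        omega
      have hsplitAs := ucount_split A hx1 (by omega : x ≤ s)
      have hsplitBs := ucount_split B hx1 (by omega : x ≤ s)
      have hrpos : 0 < (A ∩ B ∩ Finset.Ioc x z).card := Finset.card_pos.2 hr
      omega
    · -- no common element above the hole
      rw [Finset.not_nonempty_iff_eq_empty] at hr
      rw [hr] at hIER
      simp only [Finset.card_empty, Nat.add_zero] at hIER
      have hABcard : (A ∩ B).card ≤ ucount A x := by
        have hsub2 : A ∩ B ⊆ A ∩ Finset.Icc 1 x := by
          intro w hw
          have hw' := hABz hw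
          rw [Finset.mem_Icc] at hw'
          rw [Finset.mem_inter] at hw ⊢
          refine ⟨hw.1, Finset.mem_Icc.2 ⟨hw'.1, ?_⟩⟩
          by_contra hgt
          push_neg at hgt
          have hwIoc : w ∈ A ∩ B ∩ Finset.Ioc x z := by
            rw [Finset.mem_inter, Finset.mem_inter, Finset.mem_Ioc]
            exact ⟨⟨hw.1, hw.2⟩, hgt, hw'.2⟩
          rw [hr] at hwIoc
          exact absurd hwIoc (Finset.notMem_empty w)
        exact le_trans (Finset.card_le_card hsub2) (le_refl _)
      rcases Nat.eq_or_lt_of_le hx1 with heq | hlt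
      · -- x = 1
        have e1 : ucount A 1 = 0 := by
          rw [ucount, Finset.card_eq_zero]
          apply Finset.eq_empty_of_forall_notMem
          intro w hw
          rw [Finset.mem_inter, Finset.mem_Icc] at hw
          have hw1 : w = 1 := by omega
          exact hxA (by rw [← heq, ← hw1]; exact hw.1)
        have e2 : ucount B 1 = 0 := by
          rw [ucount, Finset.card_eq_zero]
          apply Finset.eq_empty_of_forall_notMem
          intro w hw
          rw [Finset.mem_inter, Finset.mem_Icc] at hw
          have hw1 : w = 1 := by omega
          exact hxB (by rw [← heq, ← hw1]; exact hw.1)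
        rw [← heq] at hABcard
        omega
      · -- x ≥ 2 : violation at x - 1
        have e1 := ucount_not_mem hx1 hxA
        have e2 := ucount_not_mem hx1 hxB
        have := hviol (x-1) (by omega) (by omega)
        omega
  · -- no tight level at all: both A and B contain [t]
    push_neg at hSne
    have hfillA : ∀ w, 1 ≤ w → w ≤ t → w ∈ A := by
      intro w h1 h2
      by_contra hwA
      have hbig : ∃ y ∈ A, w < y := by
        by_contra hno
        push_neg at hno
        have hsub : A ⊆ Finset.Icc 1 (w-1) := by
          intro v hv
          have h3 := hAsub hv; rw [gs, Finset.mem_Icc] at h3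
          have h4 := hno v hv
          rw [Finset.mem_Icc]
          rcases Nat.eq_or_lt_of_le h4 with heq | hlt2
          · exact absurd (heq ▸ hv) hwA
          · omega
        have := Finset.card_le_card hsub
        rw [hAcard, Nat.card_Icc] at this
        omega
      obtain ⟨y, hyA, hwy⟩ := hbig
      have hyn : y ≤ n := by have := hAsub hyA; rw [gs, Finset.mem_Icc] at this; omega
      obtain ⟨s, h3, h4, h5, h6⟩ := hMA w y h1 hwy hyn hyA hwA
      exact hSne s (by omega) h5 h6
    have hfillB : ∀ w, 1 ≤ w → w ≤ t → w ∈ B := by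
      intro w h1 h2
      by_contra hwB
      have htB : t ≤ b := by
        have : (A ∩ B).card ≤ B.card := Finset.card_le_card Finset.inter_subset_right
        omega
      have hbig : ∃ y ∈ B, w < y := by
        by_contra hno
        push_neg at hno
        have hsub : B ⊆ Finset.Icc 1 (w-1) := by
          intro v hv
          have h3 := hBsub hv; rw [gs, Finset.mem_Icc] at h3
          have h4 := hno v hv
          rw [Finset.mem_Icc]
          rcases Nat.eq_or_lt_of_le h4 with heq | hlt2
          · exact absurd (heq ▸ hv) hwB
          · omega
        have := Finset.card_le_card hsub
        rw [hBcard, Nat.card_Icc] at this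
        omega
      obtain ⟨y, hyB, hwy⟩ := hbig
      have hyn : y ≤ n := by have := hBsub hyB; rw [gs, Finset.mem_Icc] at this; omega
      obtain ⟨s, h3, h4, h5, h6⟩ := hMB w y h1 hwy hyn hyB hwB
      exact hSne s (by omega) h5 h6
    have hAt : ucount A t = t := by
      have hsub : Finset.Icc 1 t ⊆ A ∩ Finset.Icc 1 t := by
        intro w hw
        rw [Finset.mem_Icc] at hw
        exact Finset.mem_inter.2 ⟨hfillA w hw.1 hw.2, Finset.mem_Icc.2 hw⟩
      have h1 := Finset.card_le_card hsub
      have h2 : (A ∩ Finset.Icc 1 t).card ≤ (Finset.Icc 1 t).card :=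
        Finset.card_le_card Finset.inter_subset_right
      rw [Nat.card_Icc, Nat.add_sub_cancel] at h1 h2
      rw [ucount]
      omega
    have hBt : ucount B t = t := by
      have hsub : Finset.Icc 1 t ⊆ B ∩ Finset.Icc 1 t := by
        intro w hw
        rw [Finset.mem_Icc] at hw
        exact Finset.mem_inter.2 ⟨hfillB w hw.1 hw.2, Finset.mem_Icc.2 hw⟩
      have h1 := Finset.card_le_card hsub
      have h2 : (B ∩ Finset.Icc 1 t).card ≤ (Finset.Icc 1 t).card :=
        Finset.card_le_card Finset.inter_subset_right
      rw [Nat.card_Icc, Nat.add_sub_cancel] at h1 h2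
      rw [ucount]
      omega
    have := hviol t ht (by omega)
    omega
end


/-- The index set for `M`. -/
def MSet (n a b t : ℕ) : Set ℕ :=
  {x : ℕ | ∃ u ∈ gs n, ∃ v ∈ gs n, ∃ s ∈ gs n, s + t ≤ u + v ∧
      x = s.choose u * chooseZ (n - s) ((a : ℤ) - u) *
          (s.choose v * chooseZ (n - s) ((b : ℤ) - v))}

lemma choose_le_two_pow (m k : ℕ) : m.choose k ≤ 2 ^ m := by
  rcases le_or_gt k m with h | h
  · calc m.choose k ≤ ∑ i ∈ Finset.range (m+1), m.choose i :=
        Finset.single_le_sum (fun i _ => Nat.zero_le _) (Finset.mem_range.2 (by omega))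
    _ = 2 ^ m := Nat.sum_range_choose m
  · rw [Nat.choose_eq_zero_of_lt h]
    exact Nat.zero_le _

lemma chooseZ_le_two_pow (m : ℕ) (k : ℤ) : chooseZ m k ≤ 2 ^ m := by
  rw [chooseZ]
  split_ifs
  · exact choose_le_two_pow m _
  · exact Nat.zero_le _

lemma MSet_bdd (n a b t : ℕ) : BddAbove (MSet n a b t) := by
  refine ⟨2^n * 2^n * (2^n * 2^n), ?_⟩
  rintro x ⟨u, hu, v, hv, s, hs, hle, rfl⟩
  rw [gs, Finset.mem_Icc] at hu hv hs
  have h1 : s.choose u ≤ 2 ^ n :=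
    le_trans (choose_le_two_pow s u) (Nat.pow_le_pow_right (by omega) hs.2)
  have h2 : chooseZ (n - s) ((a : ℤ) - u) ≤ 2 ^ n :=
    le_trans (chooseZ_le_two_pow _ _) (Nat.pow_le_pow_right (by omega) (by omega))
  have h3 : s.choose v ≤ 2 ^ n :=
    le_trans (choose_le_two_pow s v) (Nat.pow_le_pow_right (by omega) hs.2)
  have h4 : chooseZ (n - s) ((b : ℤ) - v) ≤ 2 ^ n :=
    le_trans (chooseZ_le_two_pow _ _) (Nat.pow_le_pow_right (by omega) (by omega))
  exact Nat.mul_le_mul (Nat.mul_le_mul h1 h2) (Nat.mul_le_mul h3 h4)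

/-- The set over which `NProd` takes the sup. -/
def NSet (n a b t : ℕ) : Set ℕ :=
  {x : ℕ | ∃ F G : Finset (Finset ℕ),
    UniformOn n a F ∧ UniformOn n b G ∧ CrossInt t F G ∧ x = F.card * G.card}

lemma NSet_bdd (n a b t : ℕ) : BddAbove (NSet n a b t) := by
  refine ⟨n.choose a * n.choose b, ?_⟩
  rintro x ⟨F, G, hF, hG, _, rfl⟩
  have hFs : F ⊆ (gs n).powersetCard a := by
    intro A hA
    exact Finset.mem_powersetCard.2 ⟨(hF A hA).1, (hF A hA).2⟩
  have hGs : G ⊆ (gs n).powersetCard b := by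
    intro B hB
    exact Finset.mem_powersetCard.2 ⟨(hG B hB).1, (hG B hB).2⟩
  have h1 := Finset.card_le_card hFs
  have h2 := Finset.card_le_card hGs
  rw [Finset.card_powersetCard, gs, Nat.card_Icc, Nat.add_sub_cancel] at h1 h2
  exact Nat.mul_le_mul h1 h2

lemma NSet_nonempty (n a b t : ℕ) : (NSet n a b t).Nonempty :=
  ⟨0, ∅, ∅, fun A hA => absurd hA (Finset.notMem_empty A),
    fun A hA => absurd hA (Finset.notMem_empty A),
    fun A hA => absurd hA (Finset.notMem_empty A), by simp⟩

/-- slices cross-intersect. -/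
lemma slice_cross {n a b t s u v : ℕ} (hs : s ≤ n) (huv : s + t ≤ u + v) :
    CrossInt t (Slice n a s u) (Slice n b s v) := by
  intro A hA B hB
  rw [mem_Slice] at hA hB
  obtain ⟨_, _, hAu⟩ := hA
  obtain ⟨_, _, hBv⟩ := hB
  have h2 := Finset.card_union_add_card_inter
    (A ∩ Finset.Icc 1 s) (B ∩ Finset.Icc 1 s)
  rw [hAu, hBv] at h2
  have h3 : (A ∩ Finset.Icc 1 s) ∩ (B ∩ Finset.Icc 1 s) = A ∩ B ∩ Finset.Icc 1 s := by
    rw [Finset.inter_inter_inter_comm, Finset.inter_self]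
  rw [h3] at h2
  have h4 : ((A ∩ Finset.Icc 1 s) ∪ (B ∩ Finset.Icc 1 s)).card ≤ s := by
    have hsub : (A ∩ Finset.Icc 1 s) ∪ (B ∩ Finset.Icc 1 s) ⊆ Finset.Icc 1 s :=
      Finset.union_subset Finset.inter_subset_right Finset.inter_subset_right
    have := Finset.card_le_card hsub
    rwa [Nat.card_Icc, Nat.add_sub_cancel] at this
  have h5 : (A ∩ B ∩ Finset.Icc 1 s).card ≤ (A ∩ B).card :=
    Finset.card_le_card Finset.inter_subset_left
  omega

/-- Lower bound. -/
lemma lower_bound (n a b t : ℕ) : sSup (MSet n a b t) ≤ NProd n a b t := by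
  rcases Set.eq_empty_or_nonempty (MSet n a b t) with he | hne
  · rw [he, csSup_empty]
    exact Nat.zero_le _
  apply csSup_le hne
  rintro x ⟨u, hu, v, hv, s, hs, hle, rfl⟩
  rw [gs, Finset.mem_Icc] at hu hv hs
  apply le_csSup (NSet_bdd n a b t)
  refine ⟨Slice n a s u, Slice n b s v, ?_, ?_, slice_cross hs.2 hle, ?_⟩
  · intro A hA
    rw [mem_Slice] at hA
    exact ⟨hA.1, hA.2.1⟩
  · intro B hB
    rw [mem_Slice] at hB
    exact ⟨hB.1, hB.2.1⟩
  · rw [card_Slice hs.2, card_Slice hs.2]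

/-- Per-pair upper bound. -/
lemma pair_upper {n a b t : ℕ} (ht : 0 < t) {F G : Finset (Finset ℕ)}
    (hF : UniformOn n a F) (hG : UniformOn n b G) (hFG : CrossInt t F G) :
    F.card * G.card ≤ n ^ 3 * sSup (MSet n a b t) := by
  classical
  obtain ⟨F', G', hF', hG', hFG', hsF', hsG', hcF, hcG⟩ :=
    exists_shifted n a b t (famW F + famW G) F G (le_refl _) hF hG hFG
  set T : Finset ((ℕ × ℕ) × ℕ) :=
    ((gs n ×ˢ gs n) ×ˢ gs n).filter (fun q => q.2 + t ≤ q.1.1 + q.1.2) with hT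
  set piece : (ℕ × ℕ) × ℕ → Finset (Finset ℕ × Finset ℕ) := fun q =>
    (F'.filter (fun A => ucount A q.2 = q.1.1)) ×ˢ
      (G'.filter (fun B => ucount B q.2 = q.1.2)) with hpiece
  have hsub : F' ×ˢ G' ⊆ T.biUnion piece := by
    intro p hp
    rw [Finset.mem_product] at hp
    obtain ⟨hpA, hpB⟩ := hp
    obtain ⟨s, hs1, hs2, hs3⟩ := key_T ht hF' hG' hFG' hsF' hsG' p.1 hpA p.2 hpB
    rw [Finset.mem_biUnion]
    have hvs : ucount p.2 s ≤ s := by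
      have : (p.2 ∩ Finset.Icc 1 s).card ≤ (Finset.Icc 1 s).card :=
        Finset.card_le_card Finset.inter_subset_right
      rwa [Nat.card_Icc, Nat.add_sub_cancel] at this
    have hus : ucount p.1 s ≤ s := by
      have : (p.1 ∩ Finset.Icc 1 s).card ≤ (Finset.Icc 1 s).card :=
        Finset.card_le_card Finset.inter_subset_right
      rwa [Nat.card_Icc, Nat.add_sub_cancel] at this
    have hua : ucount p.1 s ≤ a := by
      have h := (hF' p.1 hpA).2
      have : (p.1 ∩ Finset.Icc 1 s).card ≤ p.1.card :=
        Finset.card_le_card Finset.inter_subset_left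
      rw [h] at this
      exact this
    have hvb : ucount p.2 s ≤ b := by
      have h := (hG' p.2 hpB).2
      have : (p.2 ∩ Finset.Icc 1 s).card ≤ p.2.card :=
        Finset.card_le_card Finset.inter_subset_left
      rw [h] at this
      exact this
    have han : a ≤ n := by
      have := Finset.card_le_card (hF' p.1 hpA).1
      rw [(hF' p.1 hpA).2, gs, Nat.card_Icc, Nat.add_sub_cancel] at this
      exact this
    have hbn : b ≤ n := by
      have := Finset.card_le_card (hG' p.2 hpB).1
      rw [(hG' p.2 hpB).2, gs, Nat.card_Icc, Nat.add_sub_cancel] at this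
      exact this
    refine ⟨((ucount p.1 s, ucount p.2 s), s), ?_, ?_⟩
    · rw [hT, Finset.mem_filter, Finset.mem_product, Finset.mem_product]
      refine ⟨⟨⟨?_, ?_⟩, ?_⟩, ?_⟩
      · dsimp only; rw [gs, Finset.mem_Icc]; omega
      · dsimp only; rw [gs, Finset.mem_Icc]; omega
      · dsimp only; rw [gs, Finset.mem_Icc]; omega
      · simpa using hs3
    · rw [hpiece, Finset.mem_product]
      exact ⟨Finset.mem_filter.2 ⟨hpA, rfl⟩, Finset.mem_filter.2 ⟨hpB, rfl⟩⟩
  have hM := MSet_bdd n a b t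
  have hq : ∀ q ∈ T, (piece q).card ≤ sSup (MSet n a b t) := by
    intro q hq
    rw [hT, Finset.mem_filter, Finset.mem_product, Finset.mem_product] at hq
    obtain ⟨⟨⟨hu, hv⟩, hs⟩, hle⟩ := hq
    have hsn : q.2 ≤ n := by rw [gs, Finset.mem_Icc] at hs; exact hs.2
    have h1 : F'.filter (fun A => ucount A q.2 = q.1.1) ⊆ Slice n a q.2 q.1.1 := by
      intro A hA
      rw [Finset.mem_filter] at hA
      rw [mem_Slice]
      exact ⟨(hF' A hA.1).1, (hF' A hA.1).2, hA.2⟩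
    have h2 : G'.filter (fun B => ucount B q.2 = q.1.2) ⊆ Slice n b q.2 q.1.2 := by
      intro B hB
      rw [Finset.mem_filter] at hB
      rw [mem_Slice]
      exact ⟨(hG' B hB.1).1, (hG' B hB.1).2, hB.2⟩
    have h3 : (piece q).card ≤ (Slice n a q.2 q.1.1).card * (Slice n b q.2 q.1.2).card := by
      rw [hpiece, Finset.card_product]
      exact Nat.mul_le_mul (Finset.card_le_card h1) (Finset.card_le_card h2)
    apply le_trans h3
    apply le_csSup hM
    exact ⟨q.1.1, hu, q.1.2, hv, q.2, hs, hle,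
      by rw [card_Slice hsn, card_Slice hsn]⟩
  have hTcard : T.card ≤ n ^ 3 := by
    have h1 : T.card ≤ ((gs n ×ˢ gs n) ×ˢ gs n).card := Finset.card_filter_le _ _
    rw [Finset.card_product, Finset.card_product, gs, Nat.card_Icc, Nat.add_sub_cancel] at h1
    calc T.card ≤ n * n * n := h1
      _ = n ^ 3 := by ring
  calc F.card * G.card = (F' ×ˢ G').card := by
        rw [Finset.card_product, hcF, hcG]
    _ ≤ (T.biUnion piece).card := Finset.card_le_card hsub
    _ ≤ ∑ q ∈ T, (piece q).card := Finset.card_biUnion_le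
    _ ≤ ∑ _q ∈ T, sSup (MSet n a b t) := Finset.sum_le_sum hq
    _ = T.card * sSup (MSet n a b t) := by rw [Finset.sum_const, smul_eq_mul]
    _ ≤ n ^ 3 * sSup (MSet n a b t) := Nat.mul_le_mul_right _ hTcard

/-- Proposition: `N_prod` up to a polynomial factor. -/
theorem nprod_up_to_poly_factor (n a b t : ℕ) (hn : 0 < n) (ha : 0 < a) (hb : 0 < b)
    (ht : 0 < t) (M : ℕ)
    (hM : M = sSup {x : ℕ | ∃ u ∈ gs n, ∃ v ∈ gs n, ∃ s ∈ gs n, s + t ≤ u + v ∧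
      x = s.choose u * chooseZ (n - s) ((a : ℤ) - u) *
          (s.choose v * chooseZ (n - s) ((b : ℤ) - v))}) :
    M ≤ NProd n a b t ∧ NProd n a b t ≤ n ^ 3 * M := by
  have hMeq : M = sSup (MSet n a b t) := hM
  constructor
  · rw [hMeq]
    exact lower_bound n a b t
  · rw [hMeq]
    have hNP : NProd n a b t = sSup (NSet n a b t) := rfl
    rw [hNP]
    apply csSup_le (NSet_nonempty n a b t)
    rintro x ⟨F, G, hF, hG, hFG, rfl⟩
    exact pair_upper ht hF hG hFG
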